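/- Let A be an s×s proper binary matrix and let F be a finite field with |F| ≥ 3. Then there exists an F-labeling H of A, i.e., an s×s matrix H over F with H(i,j) ≠ 0 if and only if A(i,j) = 1, such that det H ≠ 0. -/

import Mathlib

lemma my_exists_ne_ne {F : Type*} [Fintype F] [DecidableEq F]
    (h : 3 ≤ Fintype.card F) (a b : F) : ∃ x : F, x ≠ a ∧ x ≠ b := by
  have hcard : ({a, b} : Finset F).card ≤ 2 := by
    apply le_trans (Finset.card_insert_le a {b}); simp
  have hne : (({a, b} : Finset F)ᶜ).Nonempty := by
    rw [← Finset.card_pos, Finset.card_compl]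
    omega
  obtain ⟨x, hx⟩ := hne
  simp only [Finset.mem_compl, Finset.mem_insert, Finset.mem_singleton, not_or] at hx
  exact ⟨x, hx.1, hx.2⟩

lemma aux_labeling {s : ℕ} (σ : Equiv.Perm (Fin s))
    (F : Type*) [Field F] [Fintype F] (hF : 3 ≤ Fintype.card F)
    (T : Finset (Fin s × Fin s)) :
    ∃ H : Matrix (Fin s) (Fin s) F,
      (∀ i j, H i j ≠ 0 ↔ ((i, j) ∈ T ∨ i = σ j)) ∧ H.det ≠ 0 := by
  classical
  induction T using Finset.induction_on with
  | empty =>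
      refine ⟨(σ⁻¹ : Equiv.Perm (Fin s)).permMatrix F, ?_, ?_⟩
      · intro i j
        have : ((σ⁻¹ : Equiv.Perm (Fin s)).permMatrix F) i j
            = if σ⁻¹ i = j then (1 : F) else 0 := by
          simp [Equiv.Perm.permMatrix, PEquiv.toMatrix_apply, Equiv.toPEquiv]
        rw [this]
        have hiff : i = σ j ↔ σ⁻¹ i = j := by
          constructor <;> intro h <;> subst h <;> simp
        rw [hiff]
        split_ifs with h <;> simp [h] <;> exact h
      · rw [Matrix.det_permutation]
        rcases Int.units_eq_one_or (Equiv.Perm.sign σ) with h | h <;> simp [h]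
  | @insert p T hp ih =>
      obtain ⟨H, hsupp, hdet⟩ := ih
      obtain ⟨i, j⟩ := p
      by_cases hij : i = σ j
      · refine ⟨H, ?_, hdet⟩
        intro a b
        rw [hsupp a b]
        constructor
        · rintro (h | h)
          · exact Or.inl (Finset.mem_insert_of_mem h)
          · exact Or.inr h
        · rintro (h | h)
          · rcases Finset.mem_insert.1 h with h | h
            · exact Or.inr (by cases h; exact hij)
            · exact Or.inl h
          · exact Or.inr h
      · -- H i j = 0 currently
        have hHij : H i j = 0 := by
          by_contra hne
          rcases (hsupp i j).1 hne with h | h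
          · exact hp h
          · exact hij h
        set c : F := (H.updateRow i (Pi.single j 1)).det with hc
        obtain ⟨x, hx0, hxc⟩ := my_exists_ne_ne hF (0 : F) (-H.det / c)
        have hxgood : H.det + x * c ≠ 0 := by
          by_cases hc0 : c = 0
          · simpa [hc0] using hdet
          · intro hEq
            apply hxc
            field_simp
            linear_combination hEq
        refine ⟨H.updateRow i (H i + Pi.single j x), ?_, ?_⟩
        · intro a b
          by_cases ha : a = i
          · subst ha
            by_cases hb : b = j
            · subst hb
              simp only [Matrix.updateRow_apply, if_pos rfl, Pi.add_apply,
                Pi.single_eq_same, hHij, zero_add]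
              constructor
              · intro _; exact Or.inl (Finset.mem_insert_self _ _)
              · intro _; exact hx0
            · simp only [Matrix.updateRow_apply, if_pos rfl, Pi.add_apply,
                Pi.single_eq_of_ne hb, add_zero, if_true]
              rw [hsupp a b]
              constructor
              · rintro (h | h)
                · exact Or.inl (Finset.mem_insert_of_mem h)
                · exact Or.inr h
              · rintro (h | h)
                · rcases Finset.mem_insert.1 h with h | h
                  · exact absurd (congrArg Prod.snd h) hb
                  · exact Or.inl h
                · exact Or.inr h
          · rw [Matrix.updateRow_apply, if_neg ha, hsupp a b]
            constructor
            · rintro (h | h)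
              · exact Or.inl (Finset.mem_insert_of_mem h)
              · exact Or.inr h
            · rintro (h | h)
              · rcases Finset.mem_insert.1 h with h | h
                · exact absurd (congrArg Prod.fst h) ha
                · exact Or.inl h
              · exact Or.inr h
        · have hsingle : (Pi.single j x : Fin s → F) = x • (Pi.single j 1 : Fin s → F) := by
            funext b
            by_cases hb : b = j
            · subst hb; simp
            · simp [Pi.single_eq_of_ne hb]
          have : (H.updateRow i (H i + Pi.single j x)).det
              = H.det + x * (H.updateRow i (Pi.single j 1)).det := by
            rw [hsingle, Matrix.det_updateRow_add, Matrix.det_updateRow_smul,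
              Matrix.updateRow_eq_self]
          rw [this]
          exact hxgood

theorem proper_exists_nonsingular_labeling {s : ℕ} (A : Matrix (Fin s) (Fin s) Bool)
    (hproper : ∃ σ : Equiv.Perm (Fin s), ∀ t : Fin s, A (σ t) t = true)
    (F : Type*) [Field F] [Fintype F] (hF : 3 ≤ Fintype.card F) :
    ∃ H : Matrix (Fin s) (Fin s) F,
      (∀ i j, H i j ≠ 0 ↔ A i j = true) ∧ H.det ≠ 0 := by
  classical
  obtain ⟨σ, hσ⟩ := hproper
  set T : Finset (Fin s × Fin s) :=
    Finset.univ.filter (fun p => A p.1 p.2 = true) with hT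
  obtain ⟨H, hsupp, hdet⟩ := aux_labeling σ F hF T
  refine ⟨H, ?_, hdet⟩
  intro i j
  rw [hsupp i j]
  constructor
  · rintro (h | h)
    · simpa [hT] using h
    · subst h; exact hσ j
  · intro h
    exact Or.inl (by simp [hT, h])
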